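/- Let F be a real-valued function on datasets with sensitivity Δ, i.e., |F(D) - F(D')| ≤ Δ for all adjacent D, D'. For ε ∈ (0,1) and δ ∈ (0,1), the mechanism M(D) = F(D) + N(0, σ²) with σ² = (2Δ²/ε²)·log(5/(4δ)) ≥ (2Δ²/ε²)·log(1.25/δ) satisfies (ε, δ)-differential privacy. -/

import Mathlib

open MeasureTheory ProbabilityTheory
open Real
open scoped NNReal ENNReal

lemma gaussianReal_refl (m c : ℝ) (v : ℝ≥0) :
    gaussianReal m v {x | m + c ≤ x} = gaussianReal m v {x | x ≤ m - c} := by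
  have h1 : (gaussianReal m v).map (fun x => (-1 : ℝ) * x) = gaussianReal (-m) v := by
    rw [show (fun x => (-1:ℝ) * x) = ((-1:ℝ) * ·) from rfl, gaussianReal_map_const_mul]
    congr 1
    · ring
    · ext
      push_cast
      norm_num
  have hmap : (gaussianReal m v).map (fun x => 2*m - x) = gaussianReal m v := by
    have h2 : ((gaussianReal m v).map (fun x => (-1:ℝ)*x)).map (fun x => x + 2*m)
        = (gaussianReal m v).map (fun x => 2*m - x) := by
      rw [Measure.map_map (measurable_add_const _) (measurable_const_mul _)]
      congr 1
      funext x
      simp only [Function.comp_apply]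
      ring
    rw [h1] at h2
    rw [show (fun x => x + 2*m) = (· + 2*m) from rfl, gaussianReal_map_add_const] at h2
    rw [← h2]
    congr 1
    ring
  conv_lhs => rw [← hmap]
  rw [Measure.map_apply (by fun_prop) (by exact measurableSet_Ici (a := m + c))]
  congr 1
  ext x
  simp only [Set.mem_preimage, Set.mem_setOf_eq]
  constructor <;> intro <;> linarith

lemma gaussianReal_half (m : ℝ) {v : ℝ≥0} (hv : v ≠ 0) :
    gaussianReal m v {x | m ≤ x} ≤ 1/2 := by
  have hrefl := gaussianReal_refl m 0 v
  simp only [add_zero, sub_zero] at hrefl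
  have hsing : gaussianReal m v {m} = 0 :=
    gaussianReal_absolutelyContinuous m hv (volume_singleton)
  have hunion : {x : ℝ | m ≤ x} ∪ {x | x ≤ m} = Set.univ := by
    ext x; simp [le_total m x |>.symm, le_or_gt]
    exact le_total m x
  have hinter : {x : ℝ | m ≤ x} ∩ {x | x ≤ m} = {m} := by
    ext x; simp only [Set.mem_inter_iff, Set.mem_setOf_eq, Set.mem_singleton_iff]
    constructor
    · rintro ⟨h1, h2⟩; linarith
    · rintro rfl; exact ⟨le_refl _, le_refl _⟩
  have key := measure_union_add_inter (μ := gaussianReal m v) {x : ℝ | m ≤ x}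
    (show MeasurableSet {x : ℝ | x ≤ m} from measurableSet_Iic)
  rw [hunion, hinter, hsing, add_zero, measure_univ, ← hrefl] at key
  rw [ENNReal.le_div_iff_mul_le (Or.inl two_ne_zero) (Or.inl ENNReal.ofNat_ne_top), mul_two]
  exact le_of_eq key.symm

lemma gaussianReal_tail (m T : ℝ) (hT : 0 ≤ T) {v : ℝ≥0} (hv : v ≠ 0) :
    gaussianReal m v {x | m + T ≤ x} ≤ ENNReal.ofReal (rexp (-T^2/(2*v)) / 2) := by
  have hvpos : (0:ℝ) < v := lt_of_le_of_ne v.coe_nonneg (by exact_mod_cast hv.symm)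
  rw [gaussianReal_apply m hv]
  have hbd : ∀ x ∈ {x : ℝ | m + T ≤ x}, gaussianPDF m v x
      ≤ ENNReal.ofReal (rexp (-T^2/(2*v))) * gaussianPDF (m+T) v x := by
    intro x hx
    simp only [Set.mem_setOf_eq] at hx
    rw [gaussianPDF, gaussianPDF, ← ENNReal.ofReal_mul (exp_nonneg _)]
    apply ENNReal.ofReal_le_ofReal
    rw [gaussianPDFReal, gaussianPDFReal]
    have hexp : rexp (-(x-m)^2/(2*(v:ℝ))) ≤ rexp (-T^2/(2*(v:ℝ))) * rexp (-(x-(m+T))^2/(2*(v:ℝ))) := by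
      rw [← Real.exp_add]
      apply Real.exp_le_exp.mpr
      rw [← add_div, div_le_div_iff₀ (by positivity) (by positivity)]
      nlinarith [mul_nonneg (mul_nonneg hT (sub_nonneg.mpr hx)) hvpos.le, hvpos]
    calc (√(2 * π * (v:ℝ)))⁻¹ * rexp (-(x-m)^2/(2*(v:ℝ)))
        ≤ (√(2 * π * (v:ℝ)))⁻¹ * (rexp (-T^2/(2*(v:ℝ))) * rexp (-(x-(m+T))^2/(2*(v:ℝ)))) :=
          mul_le_mul_of_nonneg_left hexp (by positivity)
      _ = rexp (-T^2/(2*(v:ℝ))) * ((√(2 * π * (v:ℝ)))⁻¹ * rexp (-(x-(m+T))^2/(2*(v:ℝ)))) := by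
          ring
  calc ∫⁻ x in {x | m + T ≤ x}, gaussianPDF m v x
      ≤ ∫⁻ x in {x | m + T ≤ x}, ENNReal.ofReal (rexp (-T^2/(2*v))) * gaussianPDF (m+T) v x :=
        setLIntegral_mono ((measurable_gaussianPDF (m+T) v).const_mul _) hbd
    _ = ENNReal.ofReal (rexp (-T^2/(2*v))) * ∫⁻ x in {x | m + T ≤ x}, gaussianPDF (m+T) v x := by
        rw [lintegral_const_mul _ (measurable_gaussianPDF _ _)]
    _ = ENNReal.ofReal (rexp (-T^2/(2*v))) * gaussianReal (m+T) v {x | m + T ≤ x} := by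
        rw [gaussianReal_apply _ hv]
    _ ≤ ENNReal.ofReal (rexp (-T^2/(2*v))) * (1/2) := by
        exact mul_le_mul_right (gaussianReal_half _ hv) _
    _ = ENNReal.ofReal (rexp (-T^2/(2*v)) / 2) := by
        rw [ENNReal.ofReal_div_of_pos two_pos, div_eq_mul_inv, one_div]
        congr 1
        simp [ENNReal.ofReal_ofNat]

lemma gaussianReal_interval (m T : ℝ) {v : ℝ≥0} (hv : v ≠ 0) :
    gaussianReal m v (Set.Ico (m+T) m) ≤ ENNReal.ofReal ((√(2*π*v))⁻¹ * (-T)) := by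
  rw [gaussianReal_apply m hv]
  calc ∫⁻ x in Set.Ico (m+T) m, gaussianPDF m v x
      ≤ ∫⁻ _ in Set.Ico (m+T) m, ENNReal.ofReal ((√(2*π*v))⁻¹) := by
        apply setLIntegral_mono (by fun_prop)
        intro x _
        rw [gaussianPDF]
        apply ENNReal.ofReal_le_ofReal
        rw [gaussianPDFReal]
        nth_rewrite 2 [show (√(2*π*v))⁻¹ = (√(2*π*v))⁻¹ * 1 by ring]
        apply mul_le_mul_of_nonneg_left _ (by positivity)
        apply Real.exp_le_one_iff.mpr
        exact div_nonpos_of_nonpos_of_nonneg (neg_nonpos.mpr (sq_nonneg _)) (by positivity)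
    _ = ENNReal.ofReal ((√(2*π*v))⁻¹) * volume (Set.Ico (m+T) m) := setLIntegral_const _ _
    _ ≤ ENNReal.ofReal ((√(2*π*v))⁻¹ * (-T)) := by
        rw [Real.volume_Ico, ← ENNReal.ofReal_mul (by positivity)]
        apply ENNReal.ofReal_le_ofReal
        nlinarith [Real.sqrt_nonneg (2*π*v)]

set_option maxHeartbeats 2000000 in
theorem gaussian_mechanism {D : Type*} (adj : D → D → Prop)
    (F : D → ℝ) (Δ : ℝ) (hΔ : 0 ≤ Δ)
    (hsens : ∀ d d', adj d d' → |F d - F d'| ≤ Δ)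
    (ε δ : ℝ) (hε : ε ∈ Set.Ioo (0:ℝ) 1) (hδ : δ ∈ Set.Ioo (0:ℝ) 1)
    (M : D → Measure ℝ)
    (hM : ∀ d, M d = gaussianReal (F d)
      (Real.toNNReal ((2 * Δ ^ 2 / ε ^ 2) * Real.log (5 / (4 * δ))))) :
    ∀ d d', adj d d' → ∀ s : Set ℝ, MeasurableSet s →
      M d s ≤ ENNReal.ofReal (Real.exp ε) * M d' s + ENNReal.ofReal δ := by
  obtain ⟨hε0, hε1⟩ := hε
  obtain ⟨hδ0, hδ1⟩ := hδ
  intro d d' hadj s hs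
  rcases hΔ.eq_or_lt with hΔ0 | hΔpos
  · -- Δ = 0 : F d = F d'
    have hFF : F d = F d' := by
      have h := hsens d d' hadj
      rw [← hΔ0] at h
      have := abs_nonpos_iff.mp h
      linarith [sub_eq_zero.mp this]
    have hMM : M d = M d' := by rw [hM d, hM d', hFF]
    rw [hMM]
    have h1 : (1:ℝ≥0∞) ≤ ENNReal.ofReal (rexp ε) :=
      ENNReal.one_le_ofReal.mpr (Real.one_le_exp hε0.le)
    calc M d' s = 1 * M d' s := (one_mul _).symm
      _ ≤ ENNReal.ofReal (rexp ε) * M d' s := mul_le_mul_left h1 _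
      _ ≤ _ := le_add_right le_rfl
  -- main case Δ > 0
  set L := Real.log (5 / (4 * δ)) with hLdef
  have h54 : (0:ℝ) < 5/(4*δ) := by positivity
  have hexp15 : rexp (1/5 : ℝ) ≤ 5/4 := by
    by_contra h
    push_neg at h
    have h2 : (5/4:ℝ)^5 < (rexp (1/5:ℝ))^5 := by
      apply pow_lt_pow_left₀ h (by norm_num)
      norm_num
    rw [show ((rexp (1/5:ℝ))^5 = rexp 1) from by
      rw [← Real.exp_nat_mul]; norm_num] at h2
    nlinarith [Real.exp_one_lt_d9]
  have hgt : (5:ℝ)/4 ≤ 5/(4*δ) := by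
    rw [div_le_div_iff₀ (by norm_num) (by linarith)]
    nlinarith
  have hL : 1/5 ≤ L := (Real.le_log_iff_exp_le h54).mpr (hexp15.trans hgt)
  have hLpos : 0 < L := by linarith
  have hexpL : rexp L = 5/(4*δ) := Real.exp_log h54
  have hδeq : δ = 5/(4*rexp L) := by
    rw [hexpL]
    field_simp
  set v₀ : ℝ := 2 * Δ^2 / ε^2 * L with hv₀def
  have hv₀pos : 0 < v₀ := by
    apply mul_pos _ hLpos
    positivity
  set v : ℝ≥0 := Real.toNNReal v₀ with hvdef
  have hvco : ((v:ℝ)) = v₀ := Real.coe_toNNReal _ hv₀pos.le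
  have hvne : v ≠ 0 := by
    intro h
    rw [h] at hvco
    simp at hvco
    linarith
  rw [hM d, hM d']
  set p := F d with hp
  set q := F d' with hq
  set a := p - q with hadef
  have haab : |a| ≤ Δ := hsens d d' hadj
  have haL : -Δ ≤ a := (abs_le.mp haab).1
  have haU : a ≤ Δ := (abs_le.mp haab).2
  set T : ℝ := (2*v₀*ε - Δ^2)/(2*Δ) with hTdef
  set G : Set ℝ := {x | gaussianPDFReal p v x ≤ rexp ε * gaussianPDFReal q v x} with hGdef
  have hkey : ∀ x, x ∈ Gᶜ → 2*a*(x - p) + a^2 > 2*v₀*ε := by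
    intro x hx
    rw [hGdef] at hx
    simp only [Set.mem_compl_iff, Set.mem_setOf_eq, not_le] at hx
    rw [gaussianPDFReal, gaussianPDFReal] at hx
    have hvpos : (0:ℝ) < v := by rw [hvco]; exact hv₀pos
    have hC : 0 < (√(2*π*(v:ℝ)))⁻¹ := by positivity
    have e1 : (√(2*π*(v:ℝ)))⁻¹ * (rexp ε * rexp (-(x-q)^2/(2*(v:ℝ))))
        = rexp ε * ((√(2*π*(v:ℝ)))⁻¹ * rexp (-(x-q)^2/(2*(v:ℝ)))) := by ring
    rw [← e1] at hx
    have h2 := (mul_lt_mul_iff_right₀ hC).mp hx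
    rw [← Real.exp_add] at h2
    have h3 := Real.exp_lt_exp.mp h2
    rw [hvco] at h3
    have h2v : (0:ℝ) < 2*v₀ := by linarith
    have h5 := mul_lt_mul_of_pos_right h3 h2v
    rw [add_mul, div_mul_cancel₀ _ (ne_of_gt h2v), div_mul_cancel₀ _ (ne_of_gt h2v)] at h5
    have hid : (x-q)^2 - (x-p)^2 = 2*a*(x-p) + a^2 := by rw [hadef]; ring
    nlinarith [h5]
  have hGmeas : MeasurableSet G := by
    rw [hGdef]
    exact measurableSet_le (measurable_gaussianPDFReal _ _)
      ((measurable_gaussianPDFReal _ _).const_mul _)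
  have hgmono : ∀ b : ℝ, 0 < b → b ≤ Δ → T ≤ (2*v₀*ε - b^2)/(2*b) := by
    intro b hb hbΔ
    rw [hTdef, div_le_div_iff₀ (by positivity) (by positivity)]
    have hpos1 := mul_pos hv₀pos hε0
    have hpos2 := mul_pos hΔpos hb
    have hprod : (0:ℝ) ≤ (Δ - b) * (4*(v₀*ε) + 2*(Δ*b)) :=
      mul_nonneg (sub_nonneg.mpr hbΔ) (by linarith)
    have hkey2 : (2*v₀*ε - b^2)*(2*Δ) - (2*v₀*ε - Δ^2)*(2*b)
        = (Δ - b) * (4*(v₀*ε) + 2*(Δ*b)) := by ring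
    linarith
  have hsub : (gaussianReal p v) Gᶜ ≤ (gaussianReal p v) {x | p + T ≤ x} := by
    rcases lt_trichotomy a 0 with hneg | hzero | hpos
    · have hb : 0 < -a := by linarith
      have hbΔ : -a ≤ Δ := by linarith
      have hsubset : Gᶜ ⊆ {x | x ≤ p - T} := by
        intro x hx
        have hk := hkey x hx
        simp only [Set.mem_setOf_eq]
        have hgm := hgmono (-a) hb hbΔ
        have h6 : 2*v₀*ε - (-a)^2 < (p - x)*(2*(-a)) := by nlinarith
        have h7 : (2*v₀*ε - (-a)^2)/(2*(-a)) < p - x := (div_lt_iff₀ (by linarith)).mpr h6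
        linarith
      calc (gaussianReal p v) Gᶜ ≤ (gaussianReal p v) {x | x ≤ p - T} :=
            measure_mono hsubset
        _ = (gaussianReal p v) {x | p + T ≤ x} := (gaussianReal_refl p T v).symm
    · have hempty : Gᶜ = ∅ := by
        rw [Set.eq_empty_iff_forall_notMem]
        intro x hx
        have hk := hkey x hx
        rw [hzero] at hk
        nlinarith [mul_pos hv₀pos hε0]
      rw [hempty]
      simp
    · have hsubset : Gᶜ ⊆ {x | p + T ≤ x} := by
        intro x hx
        have hk := hkey x hx
        simp only [Set.mem_setOf_eq]
        have hgm := hgmono a hpos haU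
        have h6 : 2*v₀*ε - a^2 < (x - p)*(2*a) := by nlinarith
        have h7 : (2*v₀*ε - a^2)/(2*a) < x - p := (div_lt_iff₀ (by linarith)).mpr h6
        linarith
      exact measure_mono hsubset
  have hbadbound : (gaussianReal p v) Gᶜ ≤ ENNReal.ofReal δ := by
    refine hsub.trans ?_
    rcases le_or_gt 0 T with hT0 | hT0
    · refine (gaussianReal_tail p T hT0 hvne).trans (ENNReal.ofReal_le_ofReal ?_)
      rw [hvco]
      -- rexp (−T²/(2v₀))/2 ≤ δ
      have hkey2 : L - T^2/(2*v₀) ≤ ε/2 := by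
        have heq : L - T^2/(2*v₀) = ε/2 - ε^2/(16*L) := by
          rw [hTdef, hv₀def]
          field_simp
          ring
        have hpos : 0 ≤ ε^2/(16*L) := by positivity
        rw [heq]
        linarith
      have h7 : rexp (1/2:ℝ) ≤ 5/2 := by
        nlinarith [Real.exp_one_lt_d9, Real.exp_pos (1/2:ℝ),
          show ((rexp (1/2:ℝ))^2 = rexp 1) from by rw [← Real.exp_nat_mul]; norm_num]
      have h5 : rexp (-T^2/(2*v₀)) * rexp L ≤ 5/2 := by
        rw [← Real.exp_add]
        refine (Real.exp_le_exp.mpr ?_).trans h7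
        have : -T^2/(2*v₀) = -(T^2/(2*v₀)) := by ring
        rw [this]
        linarith
      rw [hδeq, div_le_div_iff₀ (by norm_num) (by positivity)]
      nlinarith [h5, Real.exp_pos L, (Real.exp_pos (-T^2/(2*v₀))).le]
    · -- T < 0 case
      have hsubset2 : {x : ℝ | p + T ≤ x} ⊆ {x | p ≤ x} ∪ Set.Ico (p+T) p := by
        intro x hx
        simp only [Set.mem_setOf_eq] at hx
        rcases le_or_gt p x with h | h
        · exact Or.inl h
        · exact Or.inr ⟨hx, h⟩
      -- arithmetic facts
      have hnum : 2*v₀*ε - Δ^2 < 0 := by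
        have hTm : T*(2*Δ) = 2*v₀*ε - Δ^2 := by
          rw [hTdef]
          field_simp
        nlinarith [mul_neg_of_neg_of_pos hT0 (show (0:ℝ) < 2*Δ by linarith)]
      have hv₀eq : v₀ * ε^2 = 2*Δ^2*L := by
        rw [hv₀def]
        field_simp
      have h4L : 4*L < ε := by
        have h := mul_lt_mul_of_pos_right hnum hε0
        rw [zero_mul] at h
        nlinarith [mul_pos hΔpos hΔpos, sq_nonneg Δ, mul_pos hΔpos hΔpos]
      have hL14 : L < 1/4 := by linarith
      have hexpL13 : rexp L ≤ 13/10 := by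
        have h1 : rexp L ≤ rexp (1/4:ℝ) := Real.exp_le_exp.mpr (by linarith)
        have h2 : rexp (1/4:ℝ) ≤ 13/10 := by
          nlinarith [Real.exp_one_lt_d9, Real.exp_pos (1/4:ℝ),
            show ((rexp (1/4:ℝ))^4 = rexp 1) from by rw [← Real.exp_nat_mul]; norm_num,
            sq_nonneg (rexp (1/4:ℝ) - 13/10), sq_nonneg ((rexp (1/4:ℝ))^2 - (13/10)^2),
            sq_nonneg ((rexp (1/4:ℝ))^2 + (13/10)^2)]
        linarith
      have hδlb : (25:ℝ)/26 ≤ δ := by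
        rw [hδeq, le_div_iff₀ (by positivity)]
        nlinarith [hexpL13, Real.exp_pos L]
      have hsq : (3/2)*Δ ≤ √(2*π*(v:ℝ)) := by
        rw [hvco]
        rw [show ((3:ℝ)/2)*Δ = √(((3/2)*Δ)^2) from (Real.sqrt_sq (by positivity)).symm]
        apply Real.sqrt_le_sqrt
        have hπ := Real.pi_gt_three
        have hε2 : ε^2 ≤ 1 := by nlinarith
        have hX : 2*Δ^2 ≤ 2*Δ^2/ε^2 := by
          rw [le_div_iff₀ (by positivity)]
          nlinarith [sq_nonneg Δ]
        have hstep : 2*3*(2*Δ^2*(1/5)) ≤ 2*π*(2*Δ^2*L) := by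
          have h35 : (3:ℝ)*(1/5) ≤ π*L :=
            mul_le_mul hπ.le hL (by norm_num) Real.pi_pos.le
          nlinarith [sq_nonneg Δ]
        have hstep2 : 2*π*(2*Δ^2*L) ≤ 2*π*(2*Δ^2/ε^2*L) := by
          have := mul_le_mul_of_nonneg_right hX hLpos.le
          nlinarith [Real.pi_pos]
        rw [hv₀def]
        nlinarith [sq_nonneg Δ]
      have hInv : (√(2*π*(v:ℝ)))⁻¹ ≤ 2/(3*Δ) := by
        have h1 : (√(2*π*(v:ℝ)))⁻¹ ≤ ((3/2)*Δ)⁻¹ :=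
          inv_anti₀ (by positivity) hsq
        have h2 : (((3:ℝ)/2)*Δ)⁻¹ = 2/(3*Δ) := by
          field_simp
        linarith
      have hmT : -T ≤ Δ/2 := by
        rw [hTdef, show -((2*v₀*ε-Δ^2)/(2*Δ)) = (Δ^2-2*v₀*ε)/(2*Δ) from by ring]
        rw [div_le_div_iff₀ (by positivity) (by norm_num)]
        nlinarith [mul_pos hv₀pos hε0]
      have hmT0 : 0 ≤ -T := by linarith
      have hterm : (√(2*π*(v:ℝ)))⁻¹ * (-T) ≤ 1/3 := by
        calc (√(2*π*(v:ℝ)))⁻¹ * (-T) ≤ (2/(3*Δ)) * (Δ/2) :=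
              mul_le_mul hInv hmT hmT0 (by positivity)
          _ = 1/3 := by
              field_simp
      calc (gaussianReal p v) {x | p + T ≤ x}
          ≤ (gaussianReal p v) ({x | p ≤ x} ∪ Set.Ico (p+T) p) := measure_mono hsubset2
        _ ≤ (gaussianReal p v) {x | p ≤ x} + (gaussianReal p v) (Set.Ico (p+T) p) :=
            measure_union_le _ _
        _ ≤ 1/2 + ENNReal.ofReal ((√(2*π*(v:ℝ)))⁻¹ * (-T)) :=
            add_le_add (gaussianReal_half p hvne) (gaussianReal_interval p T hvne)
        _ = ENNReal.ofReal (1/2 + (√(2*π*(v:ℝ)))⁻¹ * (-T)) := by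
            rw [ENNReal.ofReal_add (by norm_num) (by positivity),
              show (1:ℝ)/2 = (2:ℝ)⁻¹ from by norm_num,
              ENNReal.ofReal_inv_of_pos two_pos, ENNReal.ofReal_ofNat, one_div]
        _ ≤ ENNReal.ofReal δ := ENNReal.ofReal_le_ofReal (by linarith)
  -- final decomposition
  calc (gaussianReal p v) s
      = ∫⁻ x in s, gaussianPDF p v x := gaussianReal_apply p hvne s
    _ = ∫⁻ x in (s ∩ G) ∪ (s ∩ Gᶜ), gaussianPDF p v x := by
        rw [Set.inter_union_compl]
    _ ≤ (∫⁻ x in s ∩ G, gaussianPDF p v x) + ∫⁻ x in s ∩ Gᶜ, gaussianPDF p v x :=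
        lintegral_union_le _ _ _
    _ ≤ ENNReal.ofReal (rexp ε) * (gaussianReal q v) s + ENNReal.ofReal δ := by
        apply add_le_add
        · calc ∫⁻ x in s ∩ G, gaussianPDF p v x
              ≤ ∫⁻ x in s ∩ G, ENNReal.ofReal (rexp ε) * gaussianPDF q v x := by
                apply setLIntegral_mono ((measurable_gaussianPDF q v).const_mul _)
                intro x hx
                rw [gaussianPDF, gaussianPDF, ← ENNReal.ofReal_mul (exp_nonneg ε)]
                exact ENNReal.ofReal_le_ofReal hx.2
            _ = ENNReal.ofReal (rexp ε) * ∫⁻ x in s ∩ G, gaussianPDF q v x :=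
                lintegral_const_mul _ (measurable_gaussianPDF q v)
            _ ≤ ENNReal.ofReal (rexp ε) * (gaussianReal q v) s := by
                apply mul_le_mul_right
                rw [gaussianReal_apply q hvne s]
                exact lintegral_mono_set Set.inter_subset_left
        · calc ∫⁻ x in s ∩ Gᶜ, gaussianPDF p v x
              ≤ ∫⁻ x in Gᶜ, gaussianPDF p v x := lintegral_mono_set Set.inter_subset_right
            _ = (gaussianReal p v) Gᶜ := (gaussianReal_apply p hvne Gᶜ).symm
            _ ≤ ENNReal.ofReal δ := hbadbound
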